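/- arXiv:1812.06747 — 10 statements merged into one kernel-verified Lean document; each statement's English description precedes it below -/
import Mathlib

section
/- Let X be a set and R ⊆ X × X × X a ternary relation, with ⊙ the induced binary operation on subsets of X. Then the following are equivalent: (a) for all w, z, u, v ∈ X, (∃x, x R u v ∧ z R x w) ⟺ (∃x, x R v w ∧ z R u x) (constraint (C1)); (b) the operation ⊙ is associative, i.e. (U ⊙ V) ⊙ W = U ⊙ (V ⊙ W) for all U, V, W ⊆ X. -/
/-- `odot R U U' = {x : ∃ u ∈ U, ∃ u' ∈ U', x R u u'}`. -/
def odot {X : Type*} (R : X → X → X → Prop) (U U' : Set X) : Set X :=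
  {x | ∃ u ∈ U, ∃ u' ∈ U', R x u u'}

/-- Constraint (C1) holds iff the induced operation `⊙` on subsets is associative. -/
theorem C1_iff_assoc {X : Type*} (R : X → X → X → Prop) :
    (∀ w z u v : X, (∃ x, R x u v ∧ R z x w) ↔ (∃ x, R x v w ∧ R z u x)) ↔
      (∀ U V W : Set X, odot R (odot R U V) W = odot R U (odot R V W)) := by
  constructor
  · intro h U V W
    ext z
    simp only [odot, Set.mem_setOf_eq]
    constructor
    · rintro ⟨a, ⟨u, hu, v, hv, hauv⟩, w, hw, hz⟩
      obtain ⟨x, hx1, hx2⟩ := (h w z u v).mp ⟨a, hauv, hz⟩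
      exact ⟨u, hu, x, ⟨v, hv, w, hw, hx1⟩, hx2⟩
    · rintro ⟨u, hu, b, ⟨v, hv, w, hw, hbvw⟩, hz⟩
      obtain ⟨x, hx1, hx2⟩ := (h w z u v).mpr ⟨b, hbvw, hz⟩
      exact ⟨x, ⟨u, hu, v, hv, hx1⟩, w, hw, hx2⟩
  · intro h w z u v
    have := h {u} {v} {w}
    have hz := Set.ext_iff.mp this z
    simp only [odot, Set.mem_setOf_eq, Set.mem_singleton_iff] at hz
    constructor
    · rintro ⟨x, h1, h2⟩
      obtain ⟨u', hu', b, ⟨v', hv', w', hw', hb⟩, hzb⟩ :=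
        hz.mp ⟨x, ⟨u, rfl, v, rfl, h1⟩, w, rfl, h2⟩
      subst hu' hv' hw'
      exact ⟨b, hb, hzb⟩
    · rintro ⟨x, h1, h2⟩
      obtain ⟨a, ⟨u', hu', v', hv', ha⟩, w', hw', hza⟩ :=
        hz.mpr ⟨u, rfl, x, ⟨v, rfl, w, rfl, h1⟩, h2⟩
      subst hu' hv' hw'
      exact ⟨a, ha, hza⟩
end

section
/- Let (X, ⊑, Y) be a polarity frame and R ⊆ X × X × X a ternary relation, with ⊙ the induced binary operation on subsets of X and ≼ the induced preorder on X. If R satisfies (C3) (∀x, z, z' ∈ X, x R z z' → z' ≼ x), then ⊙ is thinning on ≼-increasing sets: U ⊙ W ⊆ W for all ≼-increasing U, W ⊆ X. -/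
/-- The preorder `≼` on `X` induced by the polarity `⊑ ⊆ X × Y`. -/
def preceq {X Y : Type*} (rel : X → Y → Prop) (x z : X) : Prop :=
  ∀ y : Y, rel x y → rel z y

/-- A subset of `X` is `≼`-increasing if it is upward closed under `≼`. -/
def Increasing {X Y : Type*} (rel : X → Y → Prop) (U : Set X) : Prop :=
  ∀ x z : X, preceq rel x z → x ∈ U → z ∈ U

/-- If `R` satisfies (C3), then `⊙` is thinning on `≼`-increasing sets:
    `U ⊙ W ⊆ W` for all `≼`-increasing `U, W ⊆ X`. -/
theorem C3_implies_thinning {X Y : Type*} [Nonempty X] [Nonempty Y]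
    (rel : X → Y → Prop) (R : X → X → X → Prop)
    (hC3 : ∀ x z z' : X, R x z z' → preceq rel z' x) :
    ∀ U W : Set X, Increasing rel U → Increasing rel W → odot R U W ⊆ W := by
  rintro U W _ hW x ⟨u, hu, w, hw, hR⟩
  exact hW w x (hC3 x u w hR) hw
end

section
/- Let (X, ⊑, Y) be a polarity frame and R ⊆ X × X × X a ternary relation, with ⊙ the induced binary operation on subsets of X and ≼ the induced preorder on X. If R satisfies (C2) (∀x, z, z', x R z z' ⟺ x R z' z) and (C3) (∀x, z, z', x R z z' → z' ≼ x), then U ⊙ W ⊆ U ∩ W for all ≼-increasing U, W ⊆ X. If moreover R satisfies (C4) (∀x, x R x x), then U ⊙ W = U ∩ W for all ≼-increasing U, W ⊆ X. -/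
/-- If `R` satisfies (C2) and (C3), then `U ⊙ W ⊆ U ∩ W` for all `≼`-increasing
    `U, W`; if moreover (C4) holds, then `U ⊙ W = U ∩ W` for such sets. -/
theorem C2_C3_implies_odot_le_inter {X Y : Type*} [Nonempty X] [Nonempty Y]
    (rel : X → Y → Prop) (R : X → X → X → Prop)
    (hC2 : ∀ x z z' : X, R x z z' ↔ R x z' z)
    (hC3 : ∀ x z z' : X, R x z z' → preceq rel z' x) :
    (∀ U W : Set X, Increasing rel U → Increasing rel W → odot R U W ⊆ U ∩ W) ∧
    ((∀ x : X, R x x x) →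
      ∀ U W : Set X, Increasing rel U → Increasing rel W → odot R U W = U ∩ W) := by
  have sub : ∀ U W : Set X, Increasing rel U → Increasing rel W → odot R U W ⊆ U ∩ W := by
    intro U W hU hW x hx
    obtain ⟨u, hu, w, hw, hR⟩ := hx
    exact ⟨hU u x (hC3 x w u ((hC2 x u w).mp hR)) hu, hW w x (hC3 x u w hR) hw⟩
  refine ⟨sub, fun hC4 U W hU hW => ?_⟩
  refine Set.Subset.antisymm (sub U W hU hW) ?_
  intro x ⟨hxU, hxW⟩
  exact ⟨x, hxU, x, hxW, hC4 x⟩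
end

section
/- Let (X, ⊑, Y) be a polarity frame and R ⊆ X × X × X a ternary relation; define y R^∂ u u' iff ∀x ∈ X (x R u u' → x ⊑ y). Then for all Galois stable sets A, C, F ⊆ X: (i) the conditions cl(A ⊙ F) ⊆ C, A ⊙ F ⊆ C, F ⊆ A ⇒ C, and A ⊆ C ⇐ F are all equivalent; (ii) A ⇒ C = {x ∈ X : ∀z ∈ X ∀v ∈ Y, (z ∈ A ∧ (∀c ∈ C, c ⊑ v)) → v R^∂ z x} and C ⇐ A = {x ∈ X : ∀z ∈ X ∀v ∈ Y, (z ∈ A ∧ (∀c ∈ C, c ⊑ v)) → v R^∂ x z}. -/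
/-- The upper Galois polar `U^⊥ = {y : ∀ x ∈ U, x ⊑ y}`. -/
def polar {X Y : Type*} (rel : X → Y → Prop) (U : Set X) : Set Y :=
  {y | ∀ x ∈ U, rel x y}

/-- The lower Galois polar `^⊥V = {x : ∀ y ∈ V, x ⊑ y}`. -/
def lpolar {X Y : Type*} (rel : X → Y → Prop) (V : Set Y) : Set X :=
  {x | ∀ y ∈ V, rel x y}

/-- The Galois closure `cl(U) = ^⊥(U^⊥)`. -/
def gcl {X Y : Type*} (rel : X → Y → Prop) (U : Set X) : Set X :=
  lpolar rel (polar rel U)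

/-- `rimp R U W = {x : ∀ z z', (z ∈ U ∧ z' R z x) → z' ∈ W}`. -/
def rimp {X : Type*} (R : X → X → X → Prop) (U W : Set X) : Set X :=
  {x | ∀ z z', z ∈ U ∧ R z' z x → z' ∈ W}

/-- `limp R W U = {x : ∀ z z', (z ∈ U ∧ z' R x z) → z' ∈ W}`. -/
def limp {X : Type*} (R : X → X → X → Prop) (W U : Set X) : Set X :=
  {x | ∀ z z', z ∈ U ∧ R z' x z → z' ∈ W}

/-- `y R^∂ u u'` iff `∀ x, x R u u' → x ⊑ y`. -/
def Rdual {X Y : Type*} (rel : X → Y → Prop) (R : X → X → X → Prop)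
    (y : Y) (u u' : X) : Prop :=
  ∀ x : X, R x u u' → rel x y

/-- For Galois stable `A, C, F`: (i) `cl(A ⊙ F) ⊆ C`, `A ⊙ F ⊆ C`, `F ⊆ A ⇒ C`
    and `A ⊆ C ⇐ F` are all equivalent; (ii) the residuals on stable sets are
    characterized via the relation `R^∂`. -/
theorem stable_residuation {X Y : Type*} [Nonempty X] [Nonempty Y]
    (rel : X → Y → Prop) (R : X → X → X → Prop)
    (A C F : Set X)
    (hA : gcl rel A = A) (hC : gcl rel C = C) (hF : gcl rel F = F) :
    ((gcl rel (odot R A F) ⊆ C ↔ odot R A F ⊆ C) ∧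
     (odot R A F ⊆ C ↔ F ⊆ rimp R A C) ∧
     (odot R A F ⊆ C ↔ A ⊆ limp R C F)) ∧
    (rimp R A C = {x | ∀ z : X, ∀ v : Y,
        (z ∈ A ∧ (∀ c ∈ C, rel c v)) → Rdual rel R v z x} ∧
     limp R C A = {x | ∀ z : X, ∀ v : Y,
        (z ∈ A ∧ (∀ c ∈ C, rel c v)) → Rdual rel R v x z}) := by
  have hsub : ∀ U : Set X, U ⊆ gcl rel U := by
    intro U x hx y hy
    exact hy x hx
  have hmono : ∀ U V : Set X, U ⊆ V → gcl rel U ⊆ gcl rel V := by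
    intro U V hUV x hx y hy
    exact hx y (fun a ha => hy a (hUV ha))
  refine ⟨⟨?_, ?_, ?_⟩, ?_, ?_⟩
  · constructor
    · intro h x hx
      exact h (hsub _ hx)
    · intro h
      calc gcl rel (odot R A F) ⊆ gcl rel C := hmono _ _ h
        _ = C := hC
  · constructor
    · intro h f hf z z' ⟨hz, hR⟩
      exact h ⟨z, hz, f, hf, hR⟩
    · rintro h x ⟨u, hu, u', hu', hR⟩
      exact h hu' u x ⟨hu, hR⟩
  · constructor
    · intro h a ha z z' ⟨hz, hR⟩
      exact h ⟨a, ha, z, hz, hR⟩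
    · rintro h x ⟨u, hu, u', hu', hR⟩
      exact h hu u' x ⟨hu', hR⟩
  · ext x
    constructor
    · intro hx z v ⟨hz, hv⟩ w hR
      exact hv w (hx z w ⟨hz, hR⟩)
    · rintro hx z z' ⟨hz, hR⟩
      rw [← hC]
      intro v hv
      exact hx z v ⟨hz, fun c hc => hv c hc⟩ z' hR
  · ext x
    constructor
    · intro hx z v ⟨hz, hv⟩ w hR
      exact hv w (hx z w ⟨hz, hR⟩)
    · rintro hx z z' ⟨hz, hR⟩
      rw [← hC]
      intro v hv
      exact hx z v ⟨hz, fun c hc => hv c hc⟩ z' hR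
end

section
/- Let (X, ⊑, Y) be a polarity frame and R ⊆ X × X × X a ternary relation; for Galois stable sets A, C ⊆ X define A ⊚ C = cl(A ⊙ C). Then: (i) if R satisfies (C2) (∀x, z, z', x R z z' ⟺ x R z' z), then A ⊚ C = C ⊚ A for all Galois stable A, C; (ii) if R satisfies (C3) (∀x, z, z', x R z z' → z' ≼ x), then A ⊚ C ⊆ C for all Galois stable A, C; (iii) if R satisfies (C4) (∀x, x R x x), then A ∩ C ⊆ A ⊚ C for all Galois stable A, C. -/
/-- The operation on stable sets: `A ⊚ C = cl(A ⊙ C)`. -/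
def sodot {X Y : Type*} (rel : X → Y → Prop) (R : X → X → X → Prop)
    (A C : Set X) : Set X :=
  gcl rel (odot R A C)

/-- (i) (C2) implies `⊚` is commutative on stable sets; (ii) (C3) implies
    `A ⊚ C ⊆ C` on stable sets; (iii) (C4) implies `A ∩ C ⊆ A ⊚ C` on stable sets. -/
theorem sodot_properties {X Y : Type*} [Nonempty X] [Nonempty Y]
    (rel : X → Y → Prop) (R : X → X → X → Prop) :
    ((∀ x z z' : X, R x z z' ↔ R x z' z) →
      ∀ A C : Set X, gcl rel A = A → gcl rel C = C →
        sodot rel R A C = sodot rel R C A) ∧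
    ((∀ x z z' : X, R x z z' → preceq rel z' x) →
      ∀ A C : Set X, gcl rel A = A → gcl rel C = C →
        sodot rel R A C ⊆ C) ∧
    ((∀ x : X, R x x x) →
      ∀ A C : Set X, gcl rel A = A → gcl rel C = C →
        A ∩ C ⊆ sodot rel R A C) := by
  refine ⟨?_, ?_, ?_⟩
  · intro hC2 A C _ _
    have : odot R A C = odot R C A := by
      ext x
      constructor
      · rintro ⟨u, hu, u', hu', h⟩; exact ⟨u', hu', u, hu, (hC2 x u u').mp h⟩
      · rintro ⟨u, hu, u', hu', h⟩; exact ⟨u', hu', u, hu, (hC2 x u u').mp h⟩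
    simp [sodot, this]
  · intro hC3 A C _ hC x hx
    rw [← hC]
    intro y hy
    exact hx y (fun z ⟨u, hu, u', hu', h⟩ => hC3 z u u' h y (hy u' hu'))
  · intro hC4 A C _ _ x ⟨hxA, hxC⟩ y hy
    exact hy x ⟨x, hxA, x, hxC, hC4 x⟩
end

section
/- Let L be a lattice with a binary operation ∘ that is monotone in each argument. Then: (i) for all filters x, z of L, the set x ∘̂ z is a filter of L; (ii) for principal filters, ↑a ∘̂ ↑b = ↑(a ∘ b) for all a, b ∈ L; (iii) if ∘ is associative, then x ∘̂ (z ∘̂ w) = (x ∘̂ z) ∘̂ w for all filters x, z, w; (iv) if ∘ is commutative, then x ∘̂ z = z ∘̂ x for all filters x, z. -/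
/-- A (lattice) filter: nonempty, upward closed and closed under binary meets. -/
def IsLatFilter {L : Type*} [Lattice L] (x : Set L) : Prop :=
  x.Nonempty ∧ (∀ a ∈ x, ∀ b : L, a ≤ b → b ∈ x) ∧ ∀ a ∈ x, ∀ b ∈ x, a ⊓ b ∈ x

/-- `x ∘̂ z = {c : ∃ a ∈ x, ∃ b ∈ z, a ∘ b ≤ c}`. -/
def fmul {L : Type*} [Lattice L] (f : L → L → L) (x z : Set L) : Set L :=
  {c | ∃ a ∈ x, ∃ b ∈ z, f a b ≤ c}

/-- (i) `x ∘̂ z` is a filter for filters `x, z`; (ii) `↑a ∘̂ ↑b = ↑(a ∘ b)`;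
    (iii) if `∘` is associative, so is `∘̂` on filters; (iv) if `∘` is
    commutative, so is `∘̂` on filters. -/
theorem fmul_properties {L : Type*} [Lattice L] (f : L → L → L)
    (hmono₁ : ∀ a a' b : L, a ≤ a' → f a b ≤ f a' b)
    (hmono₂ : ∀ a b b' : L, b ≤ b' → f a b ≤ f a b') :
    (∀ x z : Set L, IsLatFilter x → IsLatFilter z → IsLatFilter (fmul f x z)) ∧
    (∀ a b : L, fmul f (Set.Ici a) (Set.Ici b) = Set.Ici (f a b)) ∧
    ((∀ a b c : L, f (f a b) c = f a (f b c)) →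
      ∀ x z w : Set L, IsLatFilter x → IsLatFilter z → IsLatFilter w →
        fmul f x (fmul f z w) = fmul f (fmul f x z) w) ∧
    ((∀ a b : L, f a b = f b a) →
      ∀ x z : Set L, IsLatFilter x → IsLatFilter z → fmul f x z = fmul f z x) := by
  have hmono : ∀ a a' b b' : L, a ≤ a' → b ≤ b' → f a b ≤ f a' b' := fun a a' b b' h1 h2 =>
    le_trans (hmono₁ a a' b h1) (hmono₂ a' b b' h2)
  refine ⟨?_, ?_, ?_, ?_⟩
  · rintro x z ⟨⟨a, ha⟩, hxu, hxm⟩ ⟨⟨b, hb⟩, hzu, hzm⟩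
    refine ⟨⟨f a b, a, ha, b, hb, le_rfl⟩, ?_, ?_⟩
    · rintro c ⟨a, ha, b, hb, hle⟩ c' hcc'
      exact ⟨a, ha, b, hb, hle.trans hcc'⟩
    · rintro c ⟨a, ha, b, hb, hle⟩ c' ⟨a', ha', b', hb', hle'⟩
      refine ⟨a ⊓ a', hxm a ha a' ha', b ⊓ b', hzm b hb b' hb', ?_⟩
      exact le_inf ((hmono _ a _ b inf_le_left inf_le_left).trans hle)
        ((hmono _ a' _ b' inf_le_right inf_le_right).trans hle')
  · intro a b
    ext c
    constructor
    · rintro ⟨a', ha', b', hb', hle⟩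
      exact le_trans (hmono a a' b b' ha' hb') hle
    · intro hc
      exact ⟨a, le_rfl, b, le_rfl, hc⟩
  · rintro hassoc x z w ⟨_, hxu, _⟩ ⟨_, hzu, _⟩ ⟨_, hwu, _⟩
    ext e
    constructor
    · rintro ⟨a, ha, d, ⟨b, hb, c, hc, hle⟩, hle'⟩
      refine ⟨f a b, ⟨a, ha, b, hb, le_rfl⟩, c, hc, ?_⟩
      rw [hassoc]
      exact le_trans (hmono₂ a _ _ hle) hle'
    · rintro ⟨d, ⟨a, ha, b, hb, hle⟩, c, hc, hle'⟩
      refine ⟨a, ha, f b c, ⟨b, hb, c, hc, le_rfl⟩, ?_⟩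
      rw [← hassoc]
      exact le_trans (hmono₁ _ d c hle) hle'
  · rintro hcomm x z _ _
    ext c
    constructor
    · rintro ⟨a, ha, b, hb, hle⟩
      exact ⟨b, hb, a, ha, (hcomm b a).le.trans hle⟩
    · rintro ⟨a, ha, b, hb, hle⟩
      exact ⟨b, hb, a, ha, (hcomm b a).le.trans hle⟩
end

section
/- Let L be a residuated lattice with operations ∘, →, ←. For a filter x and an ideal y of L, define x →♭ y = {c ∈ L : ∃a ∈ x ∃b ∈ y, c ≤ a → b}. Then for all filters x, z and every ideal y of L: (x ∘̂ z) ∩ y is nonempty if and only if z ∩ (x →♭ y) is nonempty. -/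
/-- A (lattice) ideal: nonempty, downward closed and closed under binary joins. -/
def IsLatIdeal {L : Type*} [Lattice L] (y : Set L) : Prop :=
  y.Nonempty ∧ (∀ a ∈ y, ∀ b : L, b ≤ a → b ∈ y) ∧ ∀ a ∈ y, ∀ b ∈ y, a ⊔ b ∈ y

/-- `x →♭ y = {c : ∃ a ∈ x, ∃ b ∈ y, c ≤ a → b}` for a filter `x` and an
    ideal `y`. -/
def fimp {L : Type*} [Lattice L] (ri : L → L → L) (x y : Set L) : Set L :=
  {c | ∃ a ∈ x, ∃ b ∈ y, c ≤ ri a b}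

/-- In a residuated lattice, for filters `x, z` and an ideal `y`:
    `(x ∘̂ z) ∩ y` is nonempty iff `z ∩ (x →♭ y)` is nonempty. -/
theorem fmul_fimp_galois {L : Type*} [Lattice L]
    (f ri li : L → L → L)
    (hres : ∀ a b c : L, (f a b ≤ c ↔ b ≤ ri a c) ∧ (f a b ≤ c ↔ a ≤ li c b)) :
    ∀ x z y : Set L, IsLatFilter x → IsLatFilter z → IsLatIdeal y →
      ((fmul f x z ∩ y).Nonempty ↔ (z ∩ fimp ri x y).Nonempty) := by
  intro x z y _ _ _
  constructor
  · rintro ⟨c, ⟨a, ha, b, hb, hf⟩, hcy⟩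
    exact ⟨b, hb, a, ha, c, hcy, (hres a b c).1.mp hf⟩
  · rintro ⟨b, hb, a, ha, d, hd, hle⟩
    exact ⟨d, ⟨a, ha, b, hb, (hres a b d).1.mpr hle⟩, hd⟩
end

section
/- Let L be a residuated lattice with operations ∘, →, ←, let x be a filter of L, and let a, b ∈ L. Then a → b ∈ x if and only if for every filter z and every ideal y of L with a ∈ z and b ∈ y, the set (z ∘̂ x) ∩ y is nonempty. -/
/-- In a residuated lattice, for a filter `x`: `a → b ∈ x` iff for every
    filter `z` and ideal `y` with `a ∈ z` and `b ∈ y`, the set `(z ∘̂ x) ∩ y`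
    is nonempty. -/
theorem rimp_mem_filter_iff {L : Type*} [Lattice L]
    (f ri li : L → L → L)
    (hres : ∀ a b c : L, (f a b ≤ c ↔ b ≤ ri a c) ∧ (f a b ≤ c ↔ a ≤ li c b))
    (x : Set L) (hx : IsLatFilter x) (a b : L) :
    ri a b ∈ x ↔
      ∀ z y : Set L, IsLatFilter z → IsLatIdeal y → a ∈ z → b ∈ y →
        (fmul f z x ∩ y).Nonempty := by
  constructor
  · intro h z y _ _ haz hby
    refine ⟨b, ⟨a, haz, ri a b, h, ?_⟩, hby⟩
    exact (hres a (ri a b) b).1.mpr le_rfl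
  · intro h
    obtain ⟨c, ⟨a', ha', b', hb', hfb⟩, hcb⟩ :=
      h {c | a ≤ c} {c | c ≤ b}
        ⟨⟨a, le_rfl⟩, fun u hu v huv => le_trans hu huv,
          fun u hu v hv => le_inf hu hv⟩
        ⟨⟨b, le_rfl⟩, fun u hu v hvu => le_trans hvu hu,
          fun u hu v hv => sup_le hu hv⟩
        le_rfl le_rfl
    -- f a b' ≤ f a' b' via second residuation
    have hmono : f a b' ≤ f a' b' :=
      (hres a b' (f a' b')).2.mpr
        (le_trans ha' ((hres a' b' (f a' b')).2.mp le_rfl))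
    have : f a b' ≤ b := le_trans hmono (le_trans hfb hcb)
    exact hx.2.1 b' hb' _ ((hres a b' b).1.mp this)
end

section
/- (Compactness for substructural logic.) Let Γ be a set of substructural formulas. Say a SUB-model 𝔑 = (𝔉, V) on a frame 𝔉 = (X, ⊑, Y, R) is a model of Γ if ⟦γ⟧_𝔑 = X for every γ ∈ Γ. Then Γ has a model if and only if every finite subset of Γ has a model. -/
namespace SubCompact

/-- Substructural formulas: `p_i | ⊤ | ⊥ | φ∧φ | φ∨φ | φ∘φ | φ→φ | φ←φ`
    (the constructor `coimp ψ φ` denotes `ψ ← φ`). -/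
inductive SubF : Type where
  | pv : ℕ → SubF
  | top : SubF
  | bot : SubF
  | conj : SubF → SubF → SubF
  | disj : SubF → SubF → SubF
  | fuse : SubF → SubF → SubF
  | imp : SubF → SubF → SubF
  | coimp : SubF → SubF → SubF

variable {X Y : Type*}

/-- The upper Galois polar `U^⊥ = {y : ∀ x ∈ U, x ⊑ y}`. -/
def polar (rel : X → Y → Prop) (U : Set X) : Set Y :=
  {y | ∀ x ∈ U, rel x y}

/-- The lower Galois polar `^⊥V = {x : ∀ y ∈ V, x ⊑ y}`. -/
def lpolar (rel : X → Y → Prop) (V : Set Y) : Set X :=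
  {x | ∀ y ∈ V, rel x y}

/-- `y R^∂ u u'` iff `∀ x, x R u u' → x ⊑ y`. -/
def Rdual (rel : X → Y → Prop) (R : X → X → X → Prop) (y : Y) (u u' : X) : Prop :=
  ∀ x : X, R x u u' → rel x y

/-- Semantics of substructural formulas in a SUB-model: the pair
    `(⟦φ⟧, ⦃φ⦄)` of the extent and intent of the formula. -/
def subSem (rel : X → Y → Prop) (R : X → X → X → Prop) (V : ℕ → Set X) :
    SubF → Set X × Set Y
  | .pv i => (V i, polar rel (V i))
  | .top => (Set.univ, polar rel Set.univ)
  | .bot => (lpolar rel Set.univ, Set.univ)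
  | .conj φ ψ =>
      ((subSem rel R V φ).1 ∩ (subSem rel R V ψ).1,
       polar rel ((subSem rel R V φ).1 ∩ (subSem rel R V ψ).1))
  | .disj φ ψ =>
      (lpolar rel ((subSem rel R V φ).2 ∩ (subSem rel R V ψ).2),
       (subSem rel R V φ).2 ∩ (subSem rel R V ψ).2)
  | .fuse φ ψ =>
      (lpolar rel {y | ∀ u v : X,
          u ∈ (subSem rel R V φ).1 → v ∈ (subSem rel R V ψ).1 → Rdual rel R y u v},
       {y | ∀ u v : X,
          u ∈ (subSem rel R V φ).1 → v ∈ (subSem rel R V ψ).1 → Rdual rel R y u v})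
  | .imp φ ψ =>
      ({x | ∀ z : X, ∀ y : Y,
          z ∈ (subSem rel R V φ).1 → y ∈ (subSem rel R V ψ).2 → Rdual rel R y z x},
       polar rel {x | ∀ z : X, ∀ y : Y,
          z ∈ (subSem rel R V φ).1 → y ∈ (subSem rel R V ψ).2 → Rdual rel R y z x})
  | .coimp ψ φ =>
      ({x | ∀ y : Y, ∀ z : X,
          y ∈ (subSem rel R V ψ).2 → z ∈ (subSem rel R V φ).1 → Rdual rel R y x z},
       polar rel {x | ∀ y : Y, ∀ z : X,
          y ∈ (subSem rel R V ψ).2 → z ∈ (subSem rel R V φ).1 → Rdual rel R y x z})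

/-- A SUB-model: a frame `(X, ⊑, Y, R)` (with both sorts nonempty and
    satisfying the D-conditions) together with a Galois-stable valuation. -/
structure SubModel where
  X : Type
  Y : Type
  hX : Nonempty X
  hY : Nonempty Y
  rel : X → Y → Prop
  R : X → X → X → Prop
  hD1 : ∀ x : X, ∃ y : Y, ¬ rel x y
  hD2 : ∀ y : Y, ∃ x : X, ¬ rel x y
  V : ℕ → Set X
  hV : ∀ i, lpolar rel (polar rel (V i)) = V i

/-- `M` is a model of `Γ` if every formula of `Γ` holds at every point of `X`. -/
def Models (M : SubModel) (Γ : Set SubF) : Prop :=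
  ∀ γ ∈ Γ, (subSem M.rel M.R M.V γ).1 = Set.univ

/-! ### Ultraproduct construction -/

section Ultra

variable {ι : Type} (U : Ultrafilter ι) (M : ι → SubModel)

/-- Ultraproduct incidence relation. -/
def urel (x : ∀ i, (M i).X) (y : ∀ i, (M i).Y) : Prop :=
  {i | (M i).rel (x i) (y i)} ∈ U

/-- Ultraproduct ternary relation. -/
def uR (x u v : ∀ i, (M i).X) : Prop :=
  {i | (M i).R (x i) (u i) (v i)} ∈ U

/-- Ultraproduct valuation. -/
def uV (k : ℕ) : Set (∀ i, (M i).X) :=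
  {x | {i | x i ∈ (M i).V k} ∈ U}

/-- A family of sets on the `X`-sorts is Łoś-matched with a set on the product. -/
def LosX (S : ∀ i, Set (M i).X) (T : Set (∀ i, (M i).X)) : Prop :=
  ∀ x, x ∈ T ↔ {i | x i ∈ S i} ∈ U

/-- A family of sets on the `Y`-sorts is Łoś-matched with a set on the product. -/
def LosY (S : ∀ i, Set (M i).Y) (T : Set (∀ i, (M i).Y)) : Prop :=
  ∀ y, y ∈ T ↔ {i | y i ∈ S i} ∈ U

lemma exists_fn {α : ι → Type*} (hne : ∀ i, Nonempty (α i)) (P : ∀ i, α i → Prop)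
    (h : {i | ∃ x, P i x} ∈ U) : ∃ f : ∀ i, α i, {i | P i (f i)} ∈ U := by
  classical
  refine ⟨fun i => if h' : ∃ x, P i x then h'.choose else (hne i).some, ?_⟩
  refine Filter.mem_of_superset h fun i hi => ?_
  simp only [Set.mem_setOf_eq] at hi ⊢
  rw [dif_pos hi]
  exact hi.choose_spec

lemma notMem_of_disjoint {s t : Set ι} (hs : s ∈ U) (hd : ∀ i ∈ s, i ∉ t) : t ∉ U := by
  intro ht
  obtain ⟨i, hi⟩ := Ultrafilter.nonempty_of_mem (Filter.inter_mem hs ht)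
  exact hd i hi.1 hi.2

lemma los_polar {S : ∀ i, Set (M i).X} {T : Set (∀ i, (M i).X)} (hS : LosX U M S T) :
    LosY U M (fun i => polar (M i).rel (S i)) (polar (urel U M) T) := by
  intro y
  constructor
  · intro hy
    by_contra hmem
    rw [← Ultrafilter.compl_mem_iff_notMem] at hmem
    have h2 : {i | ∃ x, x ∈ S i ∧ ¬ (M i).rel x (y i)} ∈ U := by
      refine Filter.mem_of_superset hmem fun i hi => ?_
      simp only [Set.mem_compl_iff, Set.mem_setOf_eq, polar] at hi ⊢
      push_neg at hi
      exact hi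
    obtain ⟨x, hx⟩ := exists_fn U (fun i => (M i).hX) _ h2
    have hxT : x ∈ T := (hS x).2 (Filter.mem_of_superset hx fun i hi => hi.1)
    exact notMem_of_disjoint U hx (fun i hi h => hi.2 h) (hy x hxT)
  · intro hy x hx
    have hx' := (hS x).1 hx
    exact Filter.mem_of_superset (Filter.inter_mem hy hx')
      fun i hi => hi.1 _ hi.2

lemma los_lpolar {S : ∀ i, Set (M i).Y} {T : Set (∀ i, (M i).Y)} (hS : LosY U M S T) :
    LosX U M (fun i => lpolar (M i).rel (S i)) (lpolar (urel U M) T) := by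
  intro x
  constructor
  · intro hx
    by_contra hmem
    rw [← Ultrafilter.compl_mem_iff_notMem] at hmem
    have h2 : {i | ∃ y, y ∈ S i ∧ ¬ (M i).rel (x i) y} ∈ U := by
      refine Filter.mem_of_superset hmem fun i hi => ?_
      simp only [Set.mem_compl_iff, Set.mem_setOf_eq, lpolar] at hi ⊢
      push_neg at hi
      exact hi
    obtain ⟨y, hy⟩ := exists_fn U (fun i => (M i).hY) _ h2
    have hyT : y ∈ T := (hS y).2 (Filter.mem_of_superset hy fun i hi => hi.1)
    exact notMem_of_disjoint U hy (fun i hi h => hi.2 h) (hx y hyT)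
  · intro hx y hy
    have hy' := (hS y).1 hy
    exact Filter.mem_of_superset (Filter.inter_mem hx hy')
      fun i hi => hi.1 _ hi.2

lemma los_rdual (y : ∀ i, (M i).Y) (u v : ∀ i, (M i).X) :
    Rdual (urel U M) (uR U M) y u v ↔
      {i | Rdual (M i).rel (M i).R (y i) (u i) (v i)} ∈ U := by
  constructor
  · intro h
    by_contra hmem
    rw [← Ultrafilter.compl_mem_iff_notMem] at hmem
    have h2 : {i | ∃ x, (M i).R x (u i) (v i) ∧ ¬ (M i).rel x (y i)} ∈ U := by
      refine Filter.mem_of_superset hmem fun i hi => ?_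
      simp only [Set.mem_compl_iff, Set.mem_setOf_eq, Rdual] at hi ⊢
      push_neg at hi
      exact hi
    obtain ⟨x, hx⟩ := exists_fn U (fun i => (M i).hX) _ h2
    have hR : uR U M x u v := Filter.mem_of_superset hx fun i hi => hi.1
    exact notMem_of_disjoint U hx (fun i hi hh => hi.2 hh) (h x hR)
  · intro h x hR
    exact Filter.mem_of_superset (Filter.inter_mem h hR) fun i hi => hi.1 _ hi.2

lemma los_fuseInt {A B : ∀ i, Set (M i).X}
    {A' B' : Set (∀ i, (M i).X)} (hA : LosX U M A A') (hB : LosX U M B B') :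
    LosY U M
      (fun i => {y | ∀ u v, u ∈ A i → v ∈ B i → Rdual (M i).rel (M i).R y u v})
      {y | ∀ u v, u ∈ A' → v ∈ B' → Rdual (urel U M) (uR U M) y u v} := by
  intro y
  constructor
  · intro hy
    by_contra hmem
    rw [← Ultrafilter.compl_mem_iff_notMem] at hmem
    have h2 : {i | ∃ p : (M i).X × (M i).X,
        (p.1 ∈ A i ∧ p.2 ∈ B i) ∧ ¬ Rdual (M i).rel (M i).R (y i) p.1 p.2} ∈ U := by
      refine Filter.mem_of_superset hmem fun i hi => ?_
      simp only [Set.mem_compl_iff, Set.mem_setOf_eq] at hi ⊢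
      push_neg at hi
      obtain ⟨u, v, hu, hv, hr⟩ := hi
      exact ⟨⟨u, v⟩, ⟨hu, hv⟩, hr⟩
    obtain ⟨f, hf⟩ := exists_fn U
      (fun i => (⟨((M i).hX.some, (M i).hX.some)⟩ : Nonempty ((M i).X × (M i).X))) _ h2
    have hu : (fun i => (f i).1) ∈ A' :=
      (hA _).2 (Filter.mem_of_superset hf fun i hi => hi.1.1)
    have hv : (fun i => (f i).2) ∈ B' :=
      (hB _).2 (Filter.mem_of_superset hf fun i hi => hi.1.2)
    have := (los_rdual U M y _ _).1 (hy _ _ hu hv)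
    exact notMem_of_disjoint U hf (fun i hi hh => hi.2 hh) this
  · intro hy u v hu hv
    refine (los_rdual U M y u v).2 ?_
    refine Filter.mem_of_superset
      (Filter.inter_mem hy (Filter.inter_mem ((hA u).1 hu) ((hB v).1 hv)))
      fun i hi => hi.1 _ _ hi.2.1 hi.2.2

lemma los_impExt {A : ∀ i, Set (M i).X} {B : ∀ i, Set (M i).Y}
    {A' : Set (∀ i, (M i).X)} {B' : Set (∀ i, (M i).Y)}
    (hA : LosX U M A A') (hB : LosY U M B B') :
    LosX U M
      (fun i => {x | ∀ z y, z ∈ A i → y ∈ B i → Rdual (M i).rel (M i).R y z x})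
      {x | ∀ z y, z ∈ A' → y ∈ B' → Rdual (urel U M) (uR U M) y z x} := by
  intro x
  constructor
  · intro hx
    by_contra hmem
    rw [← Ultrafilter.compl_mem_iff_notMem] at hmem
    have h2 : {i | ∃ p : (M i).X × (M i).Y,
        (p.1 ∈ A i ∧ p.2 ∈ B i) ∧ ¬ Rdual (M i).rel (M i).R p.2 p.1 (x i)} ∈ U := by
      refine Filter.mem_of_superset hmem fun i hi => ?_
      simp only [Set.mem_compl_iff, Set.mem_setOf_eq] at hi ⊢
      push_neg at hi
      obtain ⟨z, y, hz, hy, hr⟩ := hi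
      exact ⟨⟨z, y⟩, ⟨hz, hy⟩, hr⟩
    obtain ⟨f, hf⟩ := exists_fn U
      (fun i => (⟨((M i).hX.some, (M i).hY.some)⟩ : Nonempty ((M i).X × (M i).Y))) _ h2
    have hz : (fun i => (f i).1) ∈ A' :=
      (hA _).2 (Filter.mem_of_superset hf fun i hi => hi.1.1)
    have hy : (fun i => (f i).2) ∈ B' :=
      (hB _).2 (Filter.mem_of_superset hf fun i hi => hi.1.2)
    have := (los_rdual U M _ _ x).1 (hx _ _ hz hy)
    exact notMem_of_disjoint U hf (fun i hi hh => hi.2 hh) this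
  · intro hx z y hz hy
    refine (los_rdual U M y z x).2 ?_
    refine Filter.mem_of_superset
      (Filter.inter_mem hx (Filter.inter_mem ((hA z).1 hz) ((hB y).1 hy)))
      fun i hi => hi.1 _ _ hi.2.1 hi.2.2

lemma los_coimpExt {A : ∀ i, Set (M i).X} {B : ∀ i, Set (M i).Y}
    {A' : Set (∀ i, (M i).X)} {B' : Set (∀ i, (M i).Y)}
    (hA : LosX U M A A') (hB : LosY U M B B') :
    LosX U M
      (fun i => {x | ∀ y z, y ∈ B i → z ∈ A i → Rdual (M i).rel (M i).R y x z})
      {x | ∀ y z, y ∈ B' → z ∈ A' → Rdual (urel U M) (uR U M) y x z} := by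
  intro x
  constructor
  · intro hx
    by_contra hmem
    rw [← Ultrafilter.compl_mem_iff_notMem] at hmem
    have h2 : {i | ∃ p : (M i).Y × (M i).X,
        (p.1 ∈ B i ∧ p.2 ∈ A i) ∧ ¬ Rdual (M i).rel (M i).R p.1 (x i) p.2} ∈ U := by
      refine Filter.mem_of_superset hmem fun i hi => ?_
      simp only [Set.mem_compl_iff, Set.mem_setOf_eq] at hi ⊢
      push_neg at hi
      obtain ⟨y, z, hy, hz, hr⟩ := hi
      exact ⟨⟨y, z⟩, ⟨hy, hz⟩, hr⟩
    obtain ⟨f, hf⟩ := exists_fn U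
      (fun i => (⟨((M i).hY.some, (M i).hX.some)⟩ : Nonempty ((M i).Y × (M i).X))) _ h2
    have hy : (fun i => (f i).1) ∈ B' :=
      (hB _).2 (Filter.mem_of_superset hf fun i hi => hi.1.1)
    have hz : (fun i => (f i).2) ∈ A' :=
      (hA _).2 (Filter.mem_of_superset hf fun i hi => hi.1.2)
    have := (los_rdual U M _ x _).1 (hx _ _ hy hz)
    exact notMem_of_disjoint U hf (fun i hi hh => hi.2 hh) this
  · intro hx y z hy hz
    refine (los_rdual U M y x z).2 ?_
    refine Filter.mem_of_superset
      (Filter.inter_mem hx (Filter.inter_mem ((hB y).1 hy) ((hA z).1 hz)))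
      fun i hi => hi.1 _ _ hi.2.1 hi.2.2

lemma los_inter_X {A B : ∀ i, Set (M i).X} {A' B' : Set (∀ i, (M i).X)}
    (hA : LosX U M A A') (hB : LosX U M B B') :
    LosX U M (fun i => A i ∩ B i) (A' ∩ B') := by
  intro x
  constructor
  · intro hx
    exact Filter.mem_of_superset (Filter.inter_mem ((hA x).1 hx.1) ((hB x).1 hx.2))
      fun i hi => ⟨hi.1, hi.2⟩
  · intro hx
    exact ⟨(hA x).2 (Filter.mem_of_superset hx fun i hi => hi.1),
           (hB x).2 (Filter.mem_of_superset hx fun i hi => hi.2)⟩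

lemma los_inter_Y {A B : ∀ i, Set (M i).Y} {A' B' : Set (∀ i, (M i).Y)}
    (hA : LosY U M A A') (hB : LosY U M B B') :
    LosY U M (fun i => A i ∩ B i) (A' ∩ B') := by
  intro y
  constructor
  · intro hy
    exact Filter.mem_of_superset (Filter.inter_mem ((hA y).1 hy.1) ((hB y).1 hy.2))
      fun i hi => ⟨hi.1, hi.2⟩
  · intro hy
    exact ⟨(hA y).2 (Filter.mem_of_superset hy fun i hi => hi.1),
           (hB y).2 (Filter.mem_of_superset hy fun i hi => hi.2)⟩

lemma los_univ_X : LosX U M (fun _ => Set.univ) Set.univ := by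
  intro x
  simp only [Set.mem_univ, Set.setOf_true, true_iff]
  exact Filter.univ_mem

lemma los_univ_Y : LosY U M (fun _ => Set.univ) Set.univ := by
  intro y
  simp only [Set.mem_univ, Set.setOf_true, true_iff]
  exact Filter.univ_mem

/-- Łoś's theorem for the substructural semantics. -/
theorem los_subSem (φ : SubF) :
    LosX U M (fun i => (subSem (M i).rel (M i).R (M i).V φ).1)
      ((subSem (urel U M) (uR U M) (uV U M) φ).1) ∧
    LosY U M (fun i => (subSem (M i).rel (M i).R (M i).V φ).2)
      ((subSem (urel U M) (uR U M) (uV U M) φ).2) := by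
  induction φ with
  | pv k =>
      refine ⟨fun x => Iff.rfl, ?_⟩
      exact los_polar U M (fun x => Iff.rfl)
  | top =>
      exact ⟨los_univ_X U M, los_polar U M (los_univ_X U M)⟩
  | bot =>
      exact ⟨los_lpolar U M (los_univ_Y U M), los_univ_Y U M⟩
  | conj φ ψ ih1 ih2 =>
      refine ⟨los_inter_X U M ih1.1 ih2.1, los_polar U M (los_inter_X U M ih1.1 ih2.1)⟩
  | disj φ ψ ih1 ih2 =>
      refine ⟨los_lpolar U M (los_inter_Y U M ih1.2 ih2.2), los_inter_Y U M ih1.2 ih2.2⟩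
  | fuse φ ψ ih1 ih2 =>
      refine ⟨los_lpolar U M (los_fuseInt U M ih1.1 ih2.1), los_fuseInt U M ih1.1 ih2.1⟩
  | imp φ ψ ih1 ih2 =>
      refine ⟨los_impExt U M ih1.1 ih2.2, los_polar U M (los_impExt U M ih1.1 ih2.2)⟩
  | coimp ψ φ ih1 ih2 =>
      refine ⟨los_coimpExt U M ih2.1 ih1.2, los_polar U M (los_coimpExt U M ih2.1 ih1.2)⟩

/-- The ultraproduct SUB-model. -/
def uModel : SubModel where
  X := ∀ i, (M i).X
  Y := ∀ i, (M i).Y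
  hX := ⟨fun i => (M i).hX.some⟩
  hY := ⟨fun i => (M i).hY.some⟩
  rel := urel U M
  R := uR U M
  hD1 := by
    intro x
    choose y hy using fun i => (M i).hD1 (x i)
    refine ⟨y, fun h => ?_⟩
    obtain ⟨i, hi⟩ := Ultrafilter.nonempty_of_mem h
    exact hy i hi
  hD2 := by
    intro y
    choose x hx using fun i => (M i).hD2 (y i)
    refine ⟨x, fun h => ?_⟩
    obtain ⟨i, hi⟩ := Ultrafilter.nonempty_of_mem h
    exact hx i hi
  V := uV U M
  hV := by
    intro k
    ext x
    rw [los_lpolar U M (los_polar U M (fun x => Iff.rfl : LosX U M (fun i => (M i).V k) (uV U M k))) x]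
    rw [show {i | x i ∈ lpolar (M i).rel (polar (M i).rel ((M i).V k))}
        = {i | x i ∈ (M i).V k} from Set.ext fun i => by
          simp only [Set.mem_setOf_eq]
          rw [(M i).hV k]]
    exact Iff.rfl

end Ultra

/-- Compactness for substructural logic: a set of substructural formulas has a
    model iff every finite subset of it has a model. -/
theorem compactness (Γ : Set SubF) :
    (∃ M : SubModel, Models M Γ) ↔
      ∀ F : Set SubF, F ⊆ Γ → F.Finite → ∃ M : SubModel, Models M F := by
  constructor
  · rintro ⟨M, hM⟩ F hFΓ _
    exact ⟨M, fun γ hγ => hM γ (hFΓ hγ)⟩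
  · intro h
    classical
    haveI : Inhabited SubF := ⟨SubF.top⟩
    let ι : Type := {s : Finset SubF // ↑s ⊆ Γ}
    haveI : Nonempty ι := ⟨⟨∅, by simp⟩⟩
    choose M hMmod using fun i : ι => h ↑i.1 i.2 i.1.finite_toSet
    let S : Set (Set ι) := (fun γ => {i : ι | γ ∈ i.1}) '' Γ
    haveI hne : (Filter.generate S).NeBot := by
      rw [Filter.generate_neBot_iff]
      intro t hts htf
      have hts' : ∀ s, s ∈ t → ∃ γ, γ ∈ Γ ∧ {i : ι | γ ∈ i.1} = s := fun s hs => by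
        obtain ⟨γ, hγ, he⟩ := hts hs
        exact ⟨γ, hγ, he⟩
      choose! g hg1 hg2 using hts' 
      have himg : (g '' t).Finite := htf.image g
      refine ⟨⟨himg.toFinset, ?_⟩, ?_⟩
      · intro γ hγ
        rw [Finset.mem_coe, Set.Finite.mem_toFinset] at hγ
        obtain ⟨s, hs, rfl⟩ := hγ
        exact hg1 s hs
      · intro s hs
        rw [← hg2 s hs]
        simp only [Set.mem_setOf_eq, Set.Finite.mem_toFinset]
        exact ⟨s, hs, rfl⟩
    let U : Ultrafilter ι := Ultrafilter.of (Filter.generate S)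
    refine ⟨uModel U M, fun γ hγ => ?_⟩
    ext x
    simp only [Set.mem_univ, iff_true]
    refine ((los_subSem U M γ).1 x).2 ?_
    have hγset : {i : ι | γ ∈ i.1} ∈ U :=
      Ultrafilter.of_le (Filter.generate S) (Filter.mem_generate_of_mem ⟨γ, hγ, rfl⟩)
    refine Filter.mem_of_superset hγset fun i hi => ?_
    have := hMmod i γ (by simpa using hi)
    simp [this]

end SubCompact
end

section
/- (Downward Löwenheim–Skolem for substructural logic.) Let Γ be a set of substructural formulas. Say a SUB-model 𝔑 = (𝔉, V) on a frame 𝔉 = (X, ⊑, Y, R) is a model of Γ if ⟦γ⟧_𝔑 = X for every γ ∈ Γ. If Γ has a model whose frame has infinite disjoint union X ⊎ Y, then Γ has a model whose frame satisfies that X ⊎ Y is countably infinite. -/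
namespace SubLS

/-- Substructural formulas: `p_i | ⊤ | ⊥ | φ∧φ | φ∨φ | φ∘φ | φ→φ | φ←φ`
    (the constructor `coimp ψ φ` denotes `ψ ← φ`). -/
inductive SubF : Type where
  | pv : ℕ → SubF
  | top : SubF
  | bot : SubF
  | conj : SubF → SubF → SubF
  | disj : SubF → SubF → SubF
  | fuse : SubF → SubF → SubF
  | imp : SubF → SubF → SubF
  | coimp : SubF → SubF → SubF

variable {X Y : Type*}

/-- The upper Galois polar `U^⊥ = {y : ∀ x ∈ U, x ⊑ y}`. -/
def polar (rel : X → Y → Prop) (U : Set X) : Set Y :=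
  {y | ∀ x ∈ U, rel x y}

/-- The lower Galois polar `^⊥V = {x : ∀ y ∈ V, x ⊑ y}`. -/
def lpolar (rel : X → Y → Prop) (V : Set Y) : Set X :=
  {x | ∀ y ∈ V, rel x y}

/-- `y R^∂ u u'` iff `∀ x, x R u u' → x ⊑ y`. -/
def Rdual (rel : X → Y → Prop) (R : X → X → X → Prop) (y : Y) (u u' : X) : Prop :=
  ∀ x : X, R x u u' → rel x y

/-- Semantics of substructural formulas in a SUB-model: the pair
    `(⟦φ⟧, ⦃φ⦄)` of the extent and intent of the formula. -/
def subSem (rel : X → Y → Prop) (R : X → X → X → Prop) (V : ℕ → Set X) :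
    SubF → Set X × Set Y
  | .pv i => (V i, polar rel (V i))
  | .top => (Set.univ, polar rel Set.univ)
  | .bot => (lpolar rel Set.univ, Set.univ)
  | .conj φ ψ =>
      ((subSem rel R V φ).1 ∩ (subSem rel R V ψ).1,
       polar rel ((subSem rel R V φ).1 ∩ (subSem rel R V ψ).1))
  | .disj φ ψ =>
      (lpolar rel ((subSem rel R V φ).2 ∩ (subSem rel R V ψ).2),
       (subSem rel R V φ).2 ∩ (subSem rel R V ψ).2)
  | .fuse φ ψ =>
      (lpolar rel {y | ∀ u v : X,
          u ∈ (subSem rel R V φ).1 → v ∈ (subSem rel R V ψ).1 → Rdual rel R y u v},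
       {y | ∀ u v : X,
          u ∈ (subSem rel R V φ).1 → v ∈ (subSem rel R V ψ).1 → Rdual rel R y u v})
  | .imp φ ψ =>
      ({x | ∀ z : X, ∀ y : Y,
          z ∈ (subSem rel R V φ).1 → y ∈ (subSem rel R V ψ).2 → Rdual rel R y z x},
       polar rel {x | ∀ z : X, ∀ y : Y,
          z ∈ (subSem rel R V φ).1 → y ∈ (subSem rel R V ψ).2 → Rdual rel R y z x})
  | .coimp ψ φ =>
      ({x | ∀ y : Y, ∀ z : X,
          y ∈ (subSem rel R V ψ).2 → z ∈ (subSem rel R V φ).1 → Rdual rel R y x z},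
       polar rel {x | ∀ y : Y, ∀ z : X,
          y ∈ (subSem rel R V ψ).2 → z ∈ (subSem rel R V φ).1 → Rdual rel R y x z})

/-- A SUB-model: a frame `(X, ⊑, Y, R)` (with both sorts nonempty and
    satisfying the D-conditions) together with a Galois-stable valuation. -/
structure SubModel where
  X : Type
  Y : Type
  hX : Nonempty X
  hY : Nonempty Y
  rel : X → Y → Prop
  R : X → X → X → Prop
  hD1 : ∀ x : X, ∃ y : Y, ¬ rel x y
  hD2 : ∀ y : Y, ∃ x : X, ¬ rel x y
  V : ℕ → Set X
  hV : ∀ i, lpolar rel (polar rel (V i)) = V i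

/-- `M` is a model of `Γ` if every formula of `Γ` holds at every point of `X`. -/
def Models (M : SubModel) (Γ : Set SubF) : Prop :=
  ∀ γ ∈ Γ, (subSem M.rel M.R M.V γ).1 = Set.univ
/-! ### Countability of formulas -/

private def SubF.code : SubF → ℕ
  | .pv i => Nat.pair 0 i
  | .top => Nat.pair 1 0
  | .bot => Nat.pair 2 0
  | .conj a b => Nat.pair 3 (Nat.pair a.code b.code)
  | .disj a b => Nat.pair 4 (Nat.pair a.code b.code)
  | .fuse a b => Nat.pair 5 (Nat.pair a.code b.code)
  | .imp a b => Nat.pair 6 (Nat.pair a.code b.code)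
  | .coimp a b => Nat.pair 7 (Nat.pair a.code b.code)

private lemma SubF.code_inj : Function.Injective SubF.code := by
  intro a
  induction a with
  | pv i => intro b h; cases b <;> simp [SubF.code, Nat.pair_eq_pair] at h; simp [h]
  | top => intro b h; cases b <;> simp [SubF.code, Nat.pair_eq_pair] at h; rfl
  | bot => intro b h; cases b <;> simp [SubF.code, Nat.pair_eq_pair] at h; rfl
  | conj a1 a2 ih1 ih2 =>
      intro b h; cases b <;> simp [SubF.code, Nat.pair_eq_pair] at h
      rw [ih1 h.1, ih2 h.2]
  | disj a1 a2 ih1 ih2 =>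
      intro b h; cases b <;> simp [SubF.code, Nat.pair_eq_pair] at h
      rw [ih1 h.1, ih2 h.2]
  | fuse a1 a2 ih1 ih2 =>
      intro b h; cases b <;> simp [SubF.code, Nat.pair_eq_pair] at h
      rw [ih1 h.1, ih2 h.2]
  | imp a1 a2 ih1 ih2 =>
      intro b h; cases b <;> simp [SubF.code, Nat.pair_eq_pair] at h
      rw [ih1 h.1, ih2 h.2]
  | coimp a1 a2 ih1 ih2 =>
      intro b h; cases b <;> simp [SubF.code, Nat.pair_eq_pair] at h
      rw [ih1 h.1, ih2 h.2]

instance : Countable SubF := ⟨⟨SubF.code, SubF.code_inj⟩⟩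
/-! ### Restriction lemmas -/

lemma polar_restrict (rel : X → Y → Prop) (A : Set X) (B : Set Y) (U : Set X)
    (hw : ∀ y ∈ B, y ∉ polar rel U → ∃ x ∈ A, x ∈ U ∧ ¬ rel x y) :
    polar (fun (a : A) (b : B) => rel a.1 b.1) (Subtype.val ⁻¹' U) =
      Subtype.val ⁻¹' (polar rel U) := by
  ext b
  simp only [polar, Set.mem_setOf_eq, Set.mem_preimage]
  constructor
  · intro hb
    by_contra hnb
    obtain ⟨x, hxA, hxU, hxr⟩ := hw b.1 b.2 (by simpa [polar] using hnb)
    exact hxr (hb ⟨x, hxA⟩ hxU)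
  · intro hb a ha
    exact hb a.1 ha

lemma lpolar_restrict (rel : X → Y → Prop) (A : Set X) (B : Set Y) (W : Set Y)
    (hw : ∀ x ∈ A, x ∉ lpolar rel W → ∃ y ∈ B, y ∈ W ∧ ¬ rel x y) :
    lpolar (fun (a : A) (b : B) => rel a.1 b.1) (Subtype.val ⁻¹' W) =
      Subtype.val ⁻¹' (lpolar rel W) := by
  ext a
  simp only [lpolar, Set.mem_setOf_eq, Set.mem_preimage]
  constructor
  · intro ha
    by_contra hna
    obtain ⟨y, hyB, hyW, hyr⟩ := hw a.1 a.2 (by simpa [lpolar] using hna)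
    exact hyr (ha ⟨y, hyB⟩ hyW)
  · intro ha b hb
    exact ha b.1 hb

/-! ### The semantics restricted to a hull agrees with the original semantics -/

lemma sem_restrict (M : SubModel) (A : Set M.X) (B : Set M.Y)
    (hp : ∀ φ : SubF, ∀ y ∈ B, y ∉ polar M.rel (subSem M.rel M.R M.V φ).1 →
        ∃ x ∈ A, x ∈ (subSem M.rel M.R M.V φ).1 ∧ ¬ M.rel x y)
    (hl : ∀ φ : SubF, ∀ x ∈ A, x ∉ lpolar M.rel (subSem M.rel M.R M.V φ).2 →
        ∃ y ∈ B, y ∈ (subSem M.rel M.R M.V φ).2 ∧ ¬ M.rel x y)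
    (hf : ∀ φ ψ : SubF, ∀ y ∈ B, y ∉ (subSem M.rel M.R M.V (.fuse φ ψ)).2 →
        ∃ u ∈ A, ∃ v ∈ A, ∃ w ∈ A, u ∈ (subSem M.rel M.R M.V φ).1 ∧
          v ∈ (subSem M.rel M.R M.V ψ).1 ∧ M.R w u v ∧ ¬ M.rel w y)
    (hi : ∀ φ ψ : SubF, ∀ x ∈ A, x ∉ (subSem M.rel M.R M.V (.imp φ ψ)).1 →
        ∃ z ∈ A, ∃ y0 ∈ B, ∃ w ∈ A, z ∈ (subSem M.rel M.R M.V φ).1 ∧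
          y0 ∈ (subSem M.rel M.R M.V ψ).2 ∧ M.R w z x ∧ ¬ M.rel w y0)
    (hc : ∀ ψ φ : SubF, ∀ x ∈ A, x ∉ (subSem M.rel M.R M.V (.coimp ψ φ)).1 →
        ∃ y0 ∈ B, ∃ z ∈ A, ∃ w ∈ A, y0 ∈ (subSem M.rel M.R M.V ψ).2 ∧
          z ∈ (subSem M.rel M.R M.V φ).1 ∧ M.R w x z ∧ ¬ M.rel w y0) :
    ∀ φ : SubF,
      (subSem (fun (a : A) (b : B) => M.rel a.1 b.1)
          (fun (a b c : A) => M.R a.1 b.1 c.1)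
          (fun i => Subtype.val ⁻¹' M.V i) φ).1
        = Subtype.val ⁻¹' (subSem M.rel M.R M.V φ).1 ∧
      (subSem (fun (a : A) (b : B) => M.rel a.1 b.1)
          (fun (a b c : A) => M.R a.1 b.1 c.1)
          (fun i => Subtype.val ⁻¹' M.V i) φ).2
        = Subtype.val ⁻¹' (subSem M.rel M.R M.V φ).2 := by
  set rel' : A → B → Prop := fun a b => M.rel a.1 b.1 with hrel'
  set R' : A → A → A → Prop := fun a b c => M.R a.1 b.1 c.1 with hR'
  set V' : ℕ → Set A := fun i => Subtype.val ⁻¹' M.V i with hV'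
  intro φ
  induction φ with
  | pv i =>
      refine ⟨rfl, ?_⟩
      exact polar_restrict M.rel A B (M.V i) (hp (.pv i))
  | top =>
      refine ⟨by simp [subSem], ?_⟩
      have := polar_restrict M.rel A B Set.univ (hp .top)
      simpa [subSem] using this
  | bot =>
      refine ⟨?_, by simp [subSem]⟩
      have := lpolar_restrict M.rel A B Set.univ (hl .bot)
      simpa [subSem] using this
  | conj φ ψ ih1 ih2 =>
      have h1 : (subSem rel' R' V' (.conj φ ψ)).1
          = Subtype.val ⁻¹' (subSem M.rel M.R M.V (.conj φ ψ)).1 := by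
        show (subSem rel' R' V' φ).1 ∩ (subSem rel' R' V' ψ).1 = _
        rw [ih1.1, ih2.1]
        simp [subSem, Set.preimage_inter]
      refine ⟨h1, ?_⟩
      show polar rel' ((subSem rel' R' V' φ).1 ∩ (subSem rel' R' V' ψ).1) = _
      rw [ih1.1, ih2.1, ← Set.preimage_inter]
      exact polar_restrict M.rel A B _ (hp (.conj φ ψ))
  | disj φ ψ ih1 ih2 =>
      have h2 : (subSem rel' R' V' (.disj φ ψ)).2
          = Subtype.val ⁻¹' (subSem M.rel M.R M.V (.disj φ ψ)).2 := by
        show (subSem rel' R' V' φ).2 ∩ (subSem rel' R' V' ψ).2 = _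
        rw [ih1.2, ih2.2]
        simp [subSem, Set.preimage_inter]
      refine ⟨?_, h2⟩
      show lpolar rel' ((subSem rel' R' V' φ).2 ∩ (subSem rel' R' V' ψ).2) = _
      rw [ih1.2, ih2.2, ← Set.preimage_inter]
      exact lpolar_restrict M.rel A B _ (hl (.disj φ ψ))
  | fuse φ ψ ih1 ih2 =>
      have h2 : (subSem rel' R' V' (.fuse φ ψ)).2
          = Subtype.val ⁻¹' (subSem M.rel M.R M.V (.fuse φ ψ)).2 := by
        ext b
        simp only [subSem, Set.mem_setOf_eq, Set.mem_preimage, ih1.1, ih2.1,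
          Rdual]
        constructor
        · intro hb
          by_contra hg
          obtain ⟨u, huA, v, hvA, w, hwA, hu, hv, hR, hw⟩ :=
            hf φ ψ b.1 b.2 (by simpa [subSem, Rdual] using hg)
          exact hw (hb ⟨u, huA⟩ ⟨v, hvA⟩ hu hv ⟨w, hwA⟩ hR)
        · intro hb u v hu hv w hR
          exact hb u.1 v.1 hu hv w.1 hR
      refine ⟨?_, h2⟩
      have e1 : (subSem rel' R' V' (.fuse φ ψ)).1
          = lpolar rel' ((subSem rel' R' V' (.fuse φ ψ)).2) := rfl
      have e2 : (subSem M.rel M.R M.V (.fuse φ ψ)).1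
          = lpolar M.rel ((subSem M.rel M.R M.V (.fuse φ ψ)).2) := rfl
      rw [e1, h2, e2]
      exact lpolar_restrict M.rel A B _ (hl (.fuse φ ψ))
  | imp φ ψ ih1 ih2 =>
      have h1 : (subSem rel' R' V' (.imp φ ψ)).1
          = Subtype.val ⁻¹' (subSem M.rel M.R M.V (.imp φ ψ)).1 := by
        ext a
        simp only [subSem, Set.mem_setOf_eq, Set.mem_preimage, ih1.1, ih2.2,
          Rdual]
        constructor
        · intro ha
          by_contra hg
          obtain ⟨z, hzA, y0, hy0B, w, hwA, hz, hy0, hR, hw⟩ :=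
            hi φ ψ a.1 a.2 (by simpa [subSem, Rdual] using hg)
          exact hw (ha ⟨z, hzA⟩ ⟨y0, hy0B⟩ hz hy0 ⟨w, hwA⟩ hR)
        · intro ha z y hz hy w hR
          exact ha z.1 y.1 hz hy w.1 hR
      refine ⟨h1, ?_⟩
      have e1 : (subSem rel' R' V' (.imp φ ψ)).2
          = polar rel' ((subSem rel' R' V' (.imp φ ψ)).1) := rfl
      have e2 : (subSem M.rel M.R M.V (.imp φ ψ)).2
          = polar M.rel ((subSem M.rel M.R M.V (.imp φ ψ)).1) := rfl
      rw [e1, h1, e2]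
      exact polar_restrict M.rel A B _ (hp (.imp φ ψ))
  | coimp ψ φ ih1 ih2 =>
      have h1 : (subSem rel' R' V' (.coimp ψ φ)).1
          = Subtype.val ⁻¹' (subSem M.rel M.R M.V (.coimp ψ φ)).1 := by
        ext a
        simp only [subSem, Set.mem_setOf_eq, Set.mem_preimage, ih1.2, ih2.1,
          Rdual]
        constructor
        · intro ha
          by_contra hg
          obtain ⟨y0, hy0B, z, hzA, w, hwA, hy0, hz, hR, hw⟩ :=
            hc ψ φ a.1 a.2 (by simpa [subSem, Rdual] using hg)
          exact hw (ha ⟨y0, hy0B⟩ ⟨z, hzA⟩ hy0 hz ⟨w, hwA⟩ hR)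
        · intro ha y z hy hz w hR
          exact ha y.1 z.1 hy hz w.1 hR
      refine ⟨h1, ?_⟩
      have e1 : (subSem rel' R' V' (.coimp ψ φ)).2
          = polar rel' ((subSem rel' R' V' (.coimp ψ φ)).1) := rfl
      have e2 : (subSem M.rel M.R M.V (.coimp ψ φ)).2
          = polar M.rel ((subSem M.rel M.R M.V (.coimp ψ φ)).1) := rfl
      rw [e1, h1, e2]
      exact polar_restrict M.rel A B _ (hp (.coimp ψ φ))
section SkolemHull
attribute [local instance] Classical.propDecidable

/-! ### Skolem witness functions -/

noncomputable def dd1 (M : SubModel) (x : M.X) : M.Y := (M.hD1 x).choose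

lemma dd1_spec (M : SubModel) (x : M.X) : ¬ M.rel x (dd1 M x) := (M.hD1 x).choose_spec

noncomputable def dd2 (M : SubModel) (y : M.Y) : M.X := (M.hD2 y).choose

lemma dd2_spec (M : SubModel) (y : M.Y) : ¬ M.rel (dd2 M y) y := (M.hD2 y).choose_spec

noncomputable def pw (M : SubModel) (φ : SubF) (y : M.Y) : M.X :=
  if h : ∃ x, x ∈ (subSem M.rel M.R M.V φ).1 ∧ ¬ M.rel x y then h.choose else M.hX.some

lemma pw_spec (M : SubModel) (φ : SubF) (y : M.Y)
    (hy : y ∉ polar M.rel (subSem M.rel M.R M.V φ).1) :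
    pw M φ y ∈ (subSem M.rel M.R M.V φ).1 ∧ ¬ M.rel (pw M φ y) y := by
  have h : ∃ x, x ∈ (subSem M.rel M.R M.V φ).1 ∧ ¬ M.rel x y := by
    simp only [polar, Set.mem_setOf_eq] at hy
    push_neg at hy
    obtain ⟨x, hx, hr⟩ := hy
    exact ⟨x, hx, hr⟩
  simp only [pw]
  rw [dif_pos h]
  exact h.choose_spec

noncomputable def lw (M : SubModel) (φ : SubF) (x : M.X) : M.Y :=
  if h : ∃ y, y ∈ (subSem M.rel M.R M.V φ).2 ∧ ¬ M.rel x y then h.choose else M.hY.some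

lemma lw_spec (M : SubModel) (φ : SubF) (x : M.X)
    (hx : x ∉ lpolar M.rel (subSem M.rel M.R M.V φ).2) :
    lw M φ x ∈ (subSem M.rel M.R M.V φ).2 ∧ ¬ M.rel x (lw M φ x) := by
  have h : ∃ y, y ∈ (subSem M.rel M.R M.V φ).2 ∧ ¬ M.rel x y := by
    simp only [lpolar, Set.mem_setOf_eq] at hx
    push_neg at hx
    obtain ⟨y, hy, hr⟩ := hx
    exact ⟨y, hy, hr⟩
  simp only [lw]
  rw [dif_pos h]
  exact h.choose_spec

noncomputable def vw (M : SubModel) (i : ℕ) (x : M.X) : M.Y :=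
  if h : ∃ y, y ∈ polar M.rel (M.V i) ∧ ¬ M.rel x y then h.choose else M.hY.some

lemma vw_spec (M : SubModel) (i : ℕ) (x : M.X) (hx : x ∉ M.V i) :
    vw M i x ∈ polar M.rel (M.V i) ∧ ¬ M.rel x (vw M i x) := by
  have hx' : x ∉ lpolar M.rel (polar M.rel (M.V i)) := by rw [M.hV i]; exact hx
  have h : ∃ y, y ∈ polar M.rel (M.V i) ∧ ¬ M.rel x y := by
    simp only [lpolar, Set.mem_setOf_eq] at hx'
    push_neg at hx'
    obtain ⟨y, hy, hr⟩ := hx'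
    exact ⟨y, hy, hr⟩
  simp only [vw]
  rw [dif_pos h]
  exact h.choose_spec

noncomputable def fw (M : SubModel) (φ ψ : SubF) (y : M.Y) : M.X × M.X × M.X :=
  if h : ∃ p : M.X × M.X × M.X, p.1 ∈ (subSem M.rel M.R M.V φ).1 ∧
      p.2.1 ∈ (subSem M.rel M.R M.V ψ).1 ∧ M.R p.2.2 p.1 p.2.1 ∧ ¬ M.rel p.2.2 y then
    h.choose
  else (M.hX.some, M.hX.some, M.hX.some)

lemma fw_spec (M : SubModel) (φ ψ : SubF) (y : M.Y)
    (hy : y ∉ (subSem M.rel M.R M.V (.fuse φ ψ)).2) :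
    (fw M φ ψ y).1 ∈ (subSem M.rel M.R M.V φ).1 ∧
      (fw M φ ψ y).2.1 ∈ (subSem M.rel M.R M.V ψ).1 ∧
      M.R (fw M φ ψ y).2.2 (fw M φ ψ y).1 (fw M φ ψ y).2.1 ∧
      ¬ M.rel (fw M φ ψ y).2.2 y := by
  have h : ∃ p : M.X × M.X × M.X, p.1 ∈ (subSem M.rel M.R M.V φ).1 ∧
      p.2.1 ∈ (subSem M.rel M.R M.V ψ).1 ∧ M.R p.2.2 p.1 p.2.1 ∧ ¬ M.rel p.2.2 y := by
    simp only [subSem, Set.mem_setOf_eq, Rdual] at hy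
    push_neg at hy
    obtain ⟨u, v, hu, hv, w, hR, hw⟩ := hy
    exact ⟨(u, v, w), hu, hv, hR, hw⟩
  simp only [fw]
  rw [dif_pos h]
  exact h.choose_spec

noncomputable def iw (M : SubModel) (φ ψ : SubF) (x : M.X) : M.X × M.Y × M.X :=
  if h : ∃ p : M.X × M.Y × M.X, p.1 ∈ (subSem M.rel M.R M.V φ).1 ∧
      p.2.1 ∈ (subSem M.rel M.R M.V ψ).2 ∧ M.R p.2.2 p.1 x ∧ ¬ M.rel p.2.2 p.2.1 then
    h.choose
  else (M.hX.some, M.hY.some, M.hX.some)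

lemma iw_spec (M : SubModel) (φ ψ : SubF) (x : M.X)
    (hx : x ∉ (subSem M.rel M.R M.V (.imp φ ψ)).1) :
    (iw M φ ψ x).1 ∈ (subSem M.rel M.R M.V φ).1 ∧
      (iw M φ ψ x).2.1 ∈ (subSem M.rel M.R M.V ψ).2 ∧
      M.R (iw M φ ψ x).2.2 (iw M φ ψ x).1 x ∧
      ¬ M.rel (iw M φ ψ x).2.2 (iw M φ ψ x).2.1 := by
  have h : ∃ p : M.X × M.Y × M.X, p.1 ∈ (subSem M.rel M.R M.V φ).1 ∧
      p.2.1 ∈ (subSem M.rel M.R M.V ψ).2 ∧ M.R p.2.2 p.1 x ∧ ¬ M.rel p.2.2 p.2.1 := by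
    simp only [subSem, Set.mem_setOf_eq, Rdual] at hx
    push_neg at hx
    obtain ⟨z, y0, hz, hy0, w, hR, hw⟩ := hx
    exact ⟨(z, y0, w), hz, hy0, hR, hw⟩
  simp only [iw]
  rw [dif_pos h]
  exact h.choose_spec

noncomputable def cw (M : SubModel) (ψ φ : SubF) (x : M.X) : M.Y × M.X × M.X :=
  if h : ∃ p : M.Y × M.X × M.X, p.1 ∈ (subSem M.rel M.R M.V ψ).2 ∧
      p.2.1 ∈ (subSem M.rel M.R M.V φ).1 ∧ M.R p.2.2 x p.2.1 ∧ ¬ M.rel p.2.2 p.1 then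
    h.choose
  else (M.hY.some, M.hX.some, M.hX.some)

lemma cw_spec (M : SubModel) (ψ φ : SubF) (x : M.X)
    (hx : x ∉ (subSem M.rel M.R M.V (.coimp ψ φ)).1) :
    (cw M ψ φ x).1 ∈ (subSem M.rel M.R M.V ψ).2 ∧
      (cw M ψ φ x).2.1 ∈ (subSem M.rel M.R M.V φ).1 ∧
      M.R (cw M ψ φ x).2.2 x (cw M ψ φ x).2.1 ∧
      ¬ M.rel (cw M ψ φ x).2.2 (cw M ψ φ x).1 := by
  have h : ∃ p : M.Y × M.X × M.X, p.1 ∈ (subSem M.rel M.R M.V ψ).2 ∧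
      p.2.1 ∈ (subSem M.rel M.R M.V φ).1 ∧ M.R p.2.2 x p.2.1 ∧ ¬ M.rel p.2.2 p.1 := by
    simp only [subSem, Set.mem_setOf_eq, Rdual] at hx
    push_neg at hx
    obtain ⟨y0, z, hy0, hz, w, hR, hw⟩ := hx
    exact ⟨(y0, z, w), hy0, hz, hR, hw⟩
  simp only [cw]
  rw [dif_pos h]
  exact h.choose_spec

/-! ### The closure functions and the hull -/

noncomputable def fam (M : SubModel) : ℕ × SubF × SubF → M.X ⊕ M.Y → M.X ⊕ M.Y
  | (0, _, _), .inl x => .inr (dd1 M x)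
  | (0, _, _), .inr y => .inl (dd2 M y)
  | (1, φ, _), .inr y => .inl (pw M φ y)
  | (2, φ, _), .inl x => .inr (lw M φ x)
  | (3, φ, ψ), .inr y => .inl (fw M φ ψ y).1
  | (4, φ, ψ), .inr y => .inl (fw M φ ψ y).2.1
  | (5, φ, ψ), .inr y => .inl (fw M φ ψ y).2.2
  | (6, φ, ψ), .inl x => .inl (iw M φ ψ x).1
  | (7, φ, ψ), .inl x => .inr (iw M φ ψ x).2.1
  | (8, φ, ψ), .inl x => .inl (iw M φ ψ x).2.2
  | (9, ψ, φ), .inl x => .inr (cw M ψ φ x).1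
  | (10, ψ, φ), .inl x => .inl (cw M ψ φ x).2.1
  | (11, ψ, φ), .inl x => .inl (cw M ψ φ x).2.2
  | (i+12, _, _), .inl x => .inr (vw M i x)
  | _, p => p

lemma fam_0l (M : SubModel) (φ ψ : SubF) (x : M.X) :
    fam M (0, φ, ψ) (.inl x) = .inr (dd1 M x) := rfl
lemma fam_0r (M : SubModel) (φ ψ : SubF) (y : M.Y) :
    fam M (0, φ, ψ) (.inr y) = .inl (dd2 M y) := rfl
lemma fam_1 (M : SubModel) (φ ψ : SubF) (y : M.Y) :
    fam M (1, φ, ψ) (.inr y) = .inl (pw M φ y) := rfl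
lemma fam_2 (M : SubModel) (φ ψ : SubF) (x : M.X) :
    fam M (2, φ, ψ) (.inl x) = .inr (lw M φ x) := rfl
lemma fam_3 (M : SubModel) (φ ψ : SubF) (y : M.Y) :
    fam M (3, φ, ψ) (.inr y) = .inl (fw M φ ψ y).1 := rfl
lemma fam_4 (M : SubModel) (φ ψ : SubF) (y : M.Y) :
    fam M (4, φ, ψ) (.inr y) = .inl (fw M φ ψ y).2.1 := rfl
lemma fam_5 (M : SubModel) (φ ψ : SubF) (y : M.Y) :
    fam M (5, φ, ψ) (.inr y) = .inl (fw M φ ψ y).2.2 := rfl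
lemma fam_6 (M : SubModel) (φ ψ : SubF) (x : M.X) :
    fam M (6, φ, ψ) (.inl x) = .inl (iw M φ ψ x).1 := rfl
lemma fam_7 (M : SubModel) (φ ψ : SubF) (x : M.X) :
    fam M (7, φ, ψ) (.inl x) = .inr (iw M φ ψ x).2.1 := rfl
lemma fam_8 (M : SubModel) (φ ψ : SubF) (x : M.X) :
    fam M (8, φ, ψ) (.inl x) = .inl (iw M φ ψ x).2.2 := rfl
lemma fam_9 (M : SubModel) (ψ φ : SubF) (x : M.X) :
    fam M (9, ψ, φ) (.inl x) = .inr (cw M ψ φ x).1 := rfl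
lemma fam_10 (M : SubModel) (ψ φ : SubF) (x : M.X) :
    fam M (10, ψ, φ) (.inl x) = .inl (cw M ψ φ x).2.1 := rfl
lemma fam_11 (M : SubModel) (ψ φ : SubF) (x : M.X) :
    fam M (11, ψ, φ) (.inl x) = .inl (cw M ψ φ x).2.2 := rfl
lemma fam_12 (M : SubModel) (i : ℕ) (φ ψ : SubF) (x : M.X) :
    fam M (i + 12, φ, ψ) (.inl x) = .inr (vw M i x) := rfl

noncomputable def hull (M : SubModel) (e : ℕ → M.X ⊕ M.Y) : Set (M.X ⊕ M.Y) :=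
  Set.range (fun p : List (ℕ × SubF × SubF) × ℕ =>
    p.1.foldl (fun a i => fam M i a) (e p.2))

lemma hull_countable (M : SubModel) (e : ℕ → M.X ⊕ M.Y) : (hull M e).Countable :=
  Set.countable_range _

lemma mem_hull_seed (M : SubModel) (e : ℕ → M.X ⊕ M.Y) (n : ℕ) : e n ∈ hull M e :=
  ⟨([], n), rfl⟩

lemma hull_closed (M : SubModel) (e : ℕ → M.X ⊕ M.Y) (i : ℕ × SubF × SubF)
    (p : M.X ⊕ M.Y) (hp : p ∈ hull M e) : fam M i p ∈ hull M e := by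
  obtain ⟨⟨l, n⟩, rfl⟩ := hp
  exact ⟨(l ++ [i], n), by simp [List.foldl_append]⟩
end SkolemHull
/-- Downward Löwenheim–Skolem for substructural logic: if `Γ` has a model
    whose frame has infinite disjoint union `X ⊎ Y`, then `Γ` has a model whose
    frame satisfies that `X ⊎ Y` is countably infinite. -/
theorem downward_lowenheim_skolem (Γ : Set SubF)
    (h : ∃ M : SubModel, Models M Γ ∧ Infinite (M.X ⊕ M.Y)) :
    ∃ M : SubModel, Models M Γ ∧ Countable (M.X ⊕ M.Y) ∧ Infinite (M.X ⊕ M.Y) := by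
  classical
  obtain ⟨M, hMod, hInf⟩ := h
  haveI := hInf
  let e : ℕ → M.X ⊕ M.Y := fun n => Infinite.natEmbedding (M.X ⊕ M.Y) n
  have he : Function.Injective e := fun a b hab => (Infinite.natEmbedding _).injective hab
  set S : Set (M.X ⊕ M.Y) := hull M e with hSdef
  set A : Set M.X := {x | Sum.inl x ∈ S} with hAdef
  set B : Set M.Y := {y | Sum.inr y ∈ S} with hBdef
  have hcl : ∀ (i : ℕ × SubF × SubF) (p : M.X ⊕ M.Y), p ∈ S → fam M i p ∈ S :=
    fun i p hp => hull_closed M e i p hp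
  -- closure facts
  have hd1B : ∀ x ∈ A, dd1 M x ∈ B := by
    intro x hx
    have hm := hcl (0, .top, .top) (Sum.inl x) hx
    rw [fam_0l] at hm
    exact hm
  have hd2A : ∀ y ∈ B, dd2 M y ∈ A := by
    intro y hy
    have hm := hcl (0, .top, .top) (Sum.inr y) hy
    rw [fam_0r] at hm
    exact hm
  have hpA : ∀ φ : SubF, ∀ y ∈ B, y ∉ polar M.rel (subSem M.rel M.R M.V φ).1 →
      ∃ x ∈ A, x ∈ (subSem M.rel M.R M.V φ).1 ∧ ¬ M.rel x y := by
    intro φ y hyB hy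
    obtain ⟨h1, h2⟩ := pw_spec M φ y hy
    have hm := hcl (1, φ, φ) (Sum.inr y) hyB
    rw [fam_1] at hm
    exact ⟨pw M φ y, hm, h1, h2⟩
  have hlA : ∀ φ : SubF, ∀ x ∈ A, x ∉ lpolar M.rel (subSem M.rel M.R M.V φ).2 →
      ∃ y ∈ B, y ∈ (subSem M.rel M.R M.V φ).2 ∧ ¬ M.rel x y := by
    intro φ x hxA hx
    obtain ⟨h1, h2⟩ := lw_spec M φ x hx
    have hm := hcl (2, φ, φ) (Sum.inl x) hxA
    rw [fam_2] at hm
    exact ⟨lw M φ x, hm, h1, h2⟩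
  have hvA : ∀ i : ℕ, ∀ x ∈ A, x ∉ M.V i →
      ∃ y ∈ B, y ∈ polar M.rel (M.V i) ∧ ¬ M.rel x y := by
    intro i x hxA hx
    obtain ⟨h1, h2⟩ := vw_spec M i x hx
    have hm := hcl (i + 12, .top, .top) (Sum.inl x) hxA
    rw [fam_12] at hm
    exact ⟨vw M i x, hm, h1, h2⟩
  have hfA : ∀ φ ψ : SubF, ∀ y ∈ B, y ∉ (subSem M.rel M.R M.V (.fuse φ ψ)).2 →
      ∃ u ∈ A, ∃ v ∈ A, ∃ w ∈ A, u ∈ (subSem M.rel M.R M.V φ).1 ∧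
        v ∈ (subSem M.rel M.R M.V ψ).1 ∧ M.R w u v ∧ ¬ M.rel w y := by
    intro φ ψ y hyB hy
    obtain ⟨h1, h2, h3, h4⟩ := fw_spec M φ ψ y hy
    have hm3 := hcl (3, φ, ψ) (Sum.inr y) hyB
    have hm4 := hcl (4, φ, ψ) (Sum.inr y) hyB
    have hm5 := hcl (5, φ, ψ) (Sum.inr y) hyB
    rw [fam_3] at hm3; rw [fam_4] at hm4; rw [fam_5] at hm5
    exact ⟨(fw M φ ψ y).1, hm3, (fw M φ ψ y).2.1, hm4, (fw M φ ψ y).2.2, hm5,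
      h1, h2, h3, h4⟩
  have hiA : ∀ φ ψ : SubF, ∀ x ∈ A, x ∉ (subSem M.rel M.R M.V (.imp φ ψ)).1 →
      ∃ z ∈ A, ∃ y0 ∈ B, ∃ w ∈ A, z ∈ (subSem M.rel M.R M.V φ).1 ∧
        y0 ∈ (subSem M.rel M.R M.V ψ).2 ∧ M.R w z x ∧ ¬ M.rel w y0 := by
    intro φ ψ x hxA hx
    obtain ⟨h1, h2, h3, h4⟩ := iw_spec M φ ψ x hx
    have hm6 := hcl (6, φ, ψ) (Sum.inl x) hxA
    have hm7 := hcl (7, φ, ψ) (Sum.inl x) hxA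
    have hm8 := hcl (8, φ, ψ) (Sum.inl x) hxA
    rw [fam_6] at hm6; rw [fam_7] at hm7; rw [fam_8] at hm8
    exact ⟨(iw M φ ψ x).1, hm6, (iw M φ ψ x).2.1, hm7, (iw M φ ψ x).2.2, hm8,
      h1, h2, h3, h4⟩
  have hcA : ∀ ψ φ : SubF, ∀ x ∈ A, x ∉ (subSem M.rel M.R M.V (.coimp ψ φ)).1 →
      ∃ y0 ∈ B, ∃ z ∈ A, ∃ w ∈ A, y0 ∈ (subSem M.rel M.R M.V ψ).2 ∧
        z ∈ (subSem M.rel M.R M.V φ).1 ∧ M.R w x z ∧ ¬ M.rel w y0 := by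
    intro ψ φ x hxA hx
    obtain ⟨h1, h2, h3, h4⟩ := cw_spec M ψ φ x hx
    have hm9 := hcl (9, ψ, φ) (Sum.inl x) hxA
    have hm10 := hcl (10, ψ, φ) (Sum.inl x) hxA
    have hm11 := hcl (11, ψ, φ) (Sum.inl x) hxA
    rw [fam_9] at hm9; rw [fam_10] at hm10; rw [fam_11] at hm11
    exact ⟨(cw M ψ φ x).1, hm9, (cw M ψ φ x).2.1, hm10, (cw M ψ φ x).2.2, hm11,
      h1, h2, h3, h4⟩
  -- nonemptiness
  have hAne : A.Nonempty := by
    rcases he0 : e 0 with x | y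
    · refine ⟨x, ?_⟩
      show Sum.inl x ∈ S
      rw [← he0]
      exact mem_hull_seed M e 0
    · refine ⟨dd2 M y, hd2A y ?_⟩
      show Sum.inr y ∈ S
      rw [← he0]
      exact mem_hull_seed M e 0
  have hBne : B.Nonempty := by
    rcases he0 : e 0 with x | y
    · refine ⟨dd1 M x, hd1B x ?_⟩
      show Sum.inl x ∈ S
      rw [← he0]
      exact mem_hull_seed M e 0
    · refine ⟨y, ?_⟩
      show Sum.inr y ∈ S
      rw [← he0]
      exact mem_hull_seed M e 0
  -- countability and infiniteness
  have hSc : S.Countable := hull_countable M e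
  have hAc : A.Countable := hSc.preimage Sum.inl_injective
  have hBc : B.Countable := hSc.preimage Sum.inr_injective
  have hSinf : S.Infinite :=
    (Set.infinite_range_of_injective he).mono
      (by rintro p ⟨n, rfl⟩; exact mem_hull_seed M e n)
  haveI : Countable A := hAc.to_subtype
  haveI : Countable B := hBc.to_subtype
  have hsum_inf : Infinite (↥A ⊕ ↥B) := by
    by_contra hni
    rw [not_infinite_iff_finite] at hni
    haveI := hni
    have hAf : A.Finite := Set.finite_coe_iff.mp
      (Finite.of_injective (fun a : A => (Sum.inl a : ↥A ⊕ ↥B))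
        (fun a b hab => by simpa using hab))
    have hBf : B.Finite := Set.finite_coe_iff.mp
      (Finite.of_injective (fun b : B => (Sum.inr b : ↥A ⊕ ↥B))
        (fun a b hab => by simpa using hab))
    apply hSinf
    have hsub : S ⊆ Sum.inl '' A ∪ Sum.inr '' B := by
      rintro (x | y) hpm
      · exact Or.inl ⟨x, hpm, rfl⟩
      · exact Or.inr ⟨y, hpm, rfl⟩
    exact Set.Finite.subset ((hAf.image _).union (hBf.image _)) hsub
  -- the semantic agreement
  have hsem := sem_restrict M A B hpA hlA hfA hiA hcA
  refine ⟨⟨↥A, ↥B, hAne.to_subtype, hBne.to_subtype,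
      fun a b => M.rel a.1 b.1, fun a b c => M.R a.1 b.1 c.1, ?_, ?_,
      fun i => Subtype.val ⁻¹' M.V i, ?_⟩, ?_, ?_, ?_⟩
  · exact fun a => ⟨⟨dd1 M a.1, hd1B a.1 a.2⟩, dd1_spec M a.1⟩
  · exact fun b => ⟨⟨dd2 M b.1, hd2A b.1 b.2⟩, dd2_spec M b.1⟩
  · intro i
    have hw2 : ∀ x ∈ A, x ∉ lpolar M.rel (polar M.rel (M.V i)) →
        ∃ y ∈ B, y ∈ polar M.rel (M.V i) ∧ ¬ M.rel x y := by
      intro x hxA hx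
      rw [M.hV i] at hx
      exact hvA i x hxA hx
    have hstep1 := polar_restrict M.rel A B (M.V i) (hpA (.pv i))
    have hstep2 := lpolar_restrict M.rel A B (polar M.rel (M.V i)) hw2
    show lpolar (fun (a : A) (b : B) => M.rel a.1 b.1)
        (polar (fun (a : A) (b : B) => M.rel a.1 b.1) (Subtype.val ⁻¹' M.V i))
        = Subtype.val ⁻¹' M.V i
    rw [hstep1, hstep2, M.hV i]
  · intro γ hγ
    show (subSem (fun (a : A) (b : B) => M.rel a.1 b.1)
        (fun (a b c : A) => M.R a.1 b.1 c.1)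
        (fun i => Subtype.val ⁻¹' M.V i) γ).1 = Set.univ
    rw [(hsem γ).1, hMod γ hγ, Set.preimage_univ]
  · exact inferInstance
  · exact hsum_inf

end SubLS
end
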